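/- Let m ≥ n and let G ∈ F_{q^m}^{k×n} generate an F_{q^m}-linear code C ⊆ F_{q^m}^n. Then the rank-metric code Ψ_m(C) ⊆ F_q^{m×n} is MRD (every nonzero matrix has rank ≥ n−k+1) if and only if for every n×n upper triangular matrix B over F_q with all diagonal entries equal to 1, every k×k minor of GB is nonzero. -/

import Mathlib

/-- Expansion `Ψ` of a vector over the extension field `L` into a matrix over `F_q`. -/
noncomputable def expand {Fq L : Type*} [Field Fq] [Field L] [Algebra Fq L]
    {m n : ℕ} (b : Module.Basis (Fin m) Fq L) (v : Fin n → L) :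
    Matrix (Fin m) (Fin n) Fq :=
  Matrix.of fun i j => b.repr (v j) i

section Aux

open Matrix
variable {Fq L : Type*} [Field Fq] [Field L] [Algebra Fq L] {m n k : ℕ}

lemma expand_vecMul (b : Module.Basis (Fin m) Fq L) (c : Fin n → L)
    (B : Matrix (Fin n) (Fin n) Fq) :
    expand b (Matrix.vecMul c (B.map (algebraMap Fq L))) = expand b c * B := by
  ext i j
  simp only [expand, Matrix.of_apply, Matrix.mul_apply, Matrix.vecMul, dotProduct,
    Matrix.map_apply]
  have h1 : (∑ t, c t * algebraMap Fq L (B t j)) = ∑ t, B t j • c t :=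
    Finset.sum_congr rfl fun t _ => by rw [Algebra.smul_def, mul_comm]
  rw [h1, map_sum, Finsupp.coe_finset_sum, Finset.sum_apply]
  refine Finset.sum_congr rfl fun t _ => ?_
  rw [_root_.map_smul]
  simp [Finsupp.smul_apply, mul_comm]

lemma rank_expand (b : Module.Basis (Fin m) Fq L) (c : Fin n → L) :
    (expand b c).rank = Module.finrank Fq (Submodule.span Fq (Set.range c)) := by
  rw [Matrix.rank_eq_finrank_span_cols]
  change Module.finrank Fq (Submodule.span Fq (Set.range (expand b c)ᵀ)) = _
  have h : Set.range (expand b c)ᵀ = ⇑b.equivFun '' Set.range c := by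
    rw [← Set.range_comp]
    rfl
  rw [h, ← LinearEquiv.coe_coe, ← Submodule.map_span]
  exact LinearEquiv.finrank_map_eq b.equivFun _

lemma rank_le_of_zero_cols {M : Matrix (Fin m) (Fin n) Fq} {cols : Fin k → Fin n}
    (hinj : Function.Injective cols) (hz : ∀ t i, M i (cols t) = 0) :
    M.rank ≤ n - k := by
  classical
  rw [Matrix.rank_eq_finrank_span_cols]
  change Module.finrank Fq (Submodule.span Fq (Set.range Mᵀ)) ≤ n - k
  set T : Finset (Fin m → Fq) :=
    Finset.image (fun j => Mᵀ j) (Finset.univ \ Finset.image cols Finset.univ) with hT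
  have hle : Submodule.span Fq (Set.range Mᵀ) ≤ Submodule.span Fq (T : Set (Fin m → Fq)) := by
    rw [Submodule.span_le]
    rintro _ ⟨j, rfl⟩
    by_cases hj : j ∈ Finset.image cols Finset.univ
    · obtain ⟨t, _, rfl⟩ := Finset.mem_image.mp hj
      have : Mᵀ (cols t) = 0 := funext fun i => hz t i
      rw [this]
      exact Submodule.zero_mem _
    · exact Submodule.subset_span (Finset.mem_coe.mpr
        (Finset.mem_image.mpr ⟨j, Finset.mem_sdiff.mpr ⟨Finset.mem_univ _, hj⟩, rfl⟩))
  have h1 : Module.finrank Fq (Submodule.span Fq (Set.range Mᵀ)) ≤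
      Module.finrank Fq (Submodule.span Fq (T : Set (Fin m → Fq))) :=
    Submodule.finrank_mono hle
  have h2 : Module.finrank Fq (Submodule.span Fq (T : Set (Fin m → Fq))) ≤ T.card :=
    finrank_span_finset_le_card T
  have h3 : T.card ≤ n - k := by
    have h4 : T.card ≤ (Finset.univ \ Finset.image cols Finset.univ).card := by
      rw [hT]; exact Finset.card_image_le
    have hcard : (Finset.univ \ Finset.image cols Finset.univ).card = n - k := by
      rw [Finset.card_sdiff_of_subset (Finset.subset_univ _), Finset.card_image_of_injective _ hinj]
      simp
    omega
  omega

lemma exists_pivots [Fintype Fq] (K : Submodule Fq (Fin n → Fq))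
    (hk : k ≤ Module.finrank Fq K) :
    ∃ cols : Fin k → Fin n, StrictMono cols ∧ ∃ w : Fin k → (Fin n → Fq),
      ∀ t, w t ∈ K ∧ w t (cols t) = 1 ∧ ∀ j : Fin n, (cols t : ℕ) < (j : ℕ) → w t j = 0 := by
  classical
  set P : Finset (Fin n) := Finset.univ.filter
    (fun i => ∃ v ∈ K, v i ≠ 0 ∧ ∀ j : Fin n, (i : ℕ) < (j : ℕ) → v j = 0) with hP
  have hcard : k ≤ P.card := by
    refine hk.trans ?_
    set f := (LinearMap.funLeft Fq Fq (Subtype.val : {x // x ∈ P} → Fin n)).domRestrict K with hf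
    have hinj : Function.Injective f := by
      rw [← LinearMap.ker_eq_bot, LinearMap.ker_eq_bot']
      intro v hv
      by_contra hv0
      have hvne : (v : Fin n → Fq) ≠ 0 := fun h => hv0 (Subtype.ext h)
      set s := Finset.univ.filter (fun j => (v : Fin n → Fq) j ≠ 0) with hs
      have hsne : s.Nonempty := by
        obtain ⟨j, hj⟩ := Function.ne_iff.mp hvne
        exact ⟨j, by simpa [hs] using hj⟩
      set i := s.max' hsne with hi
      have hi1 : (v : Fin n → Fq) i ≠ 0 := (Finset.mem_filter.mp (s.max'_mem hsne)).2
      have hi2 : ∀ j : Fin n, (i : ℕ) < (j : ℕ) → (v : Fin n → Fq) j = 0 := by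
        intro j hj
        by_contra hne
        have hmem : j ∈ s := by simp [hs, hne]
        have := s.le_max' j hmem
        have : (j : ℕ) ≤ (i : ℕ) := this
        omega
      have hiP : i ∈ P := Finset.mem_filter.mpr ⟨Finset.mem_univ _, ⟨v, v.2, hi1, hi2⟩⟩
      have := congrFun hv ⟨i, hiP⟩
      exact hi1 this
    have := LinearMap.finrank_le_finrank_of_injective hinj
    simpa [Module.finrank_pi] using this
  obtain ⟨Q, hQP, hQcard⟩ := Finset.exists_subset_card_eq hcard
  set cols := Q.orderEmbOfFin hQcard with hcols
  have hmem : ∀ t : Fin k, ∃ v ∈ K, v (cols t) ≠ 0 ∧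
      ∀ j : Fin n, ((cols t : Fin n) : ℕ) < (j : ℕ) → v j = 0 := fun t =>
    (Finset.mem_filter.mp (hQP (Q.orderEmbOfFin_mem hQcard t))).2
  choose v hvK hvne hvz using hmem
  refine ⟨cols, (Q.orderEmbOfFin hQcard).strictMono, fun t => (v t (cols t))⁻¹ • v t,
    fun t => ⟨K.smul_mem _ (hvK t), ?_, fun j hj => ?_⟩⟩
  · simp [inv_mul_cancel₀ (hvne t)]
  · simp [hvz t j hj]

end Aux

/-- Criterion for linear MRD codes: for `m ≥ n` and `G ∈ F_{q^m}^{k×n}` a generator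
matrix (with independent rows), the code generated by `G` is MRD (every nonzero
codeword has rank `≥ n-k+1` after expansion over `F_q`) iff for every upper
unitriangular `B ∈ F_q^{n×n}` every `k×k` minor of `GB` is nonzero. -/
theorem stmt8 (Fq L : Type*) [Field Fq] [Fintype Fq] [Field L] [Algebra Fq L]
    (m n k : ℕ) (hnm : n ≤ m) (hkn : k ≤ n)
    (b : Module.Basis (Fin m) Fq L)
    (G : Matrix (Fin k) (Fin n) L)
    (hG : LinearIndependent L (fun i => G i)) :
    (∀ c ∈ Submodule.span L (Set.range fun i => G i), c ≠ 0 →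
        n - k + 1 ≤ (expand b c).rank) ↔
    (∀ B : Matrix (Fin n) (Fin n) Fq,
        (∀ i, B i i = 1) → (∀ i j : Fin n, (j : ℕ) < (i : ℕ) → B i j = 0) →
        ∀ cols : Fin k → Fin n, StrictMono cols →
          ((G * B.map (algebraMap Fq L)).submatrix id cols).det ≠ 0) := by
  classical
  constructor
  · intro hMRD B hdiag hlow cols hmono hdet
    obtain ⟨x, hx0, hxv⟩ := Matrix.exists_vecMul_eq_zero_iff.mpr hdet
    set c := Matrix.vecMul x G with hc
    have hsum : (∑ i, x i • G i) = c := by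
      funext j
      simp [hc, Matrix.vecMul, dotProduct, Finset.sum_apply]
    have hcmem : c ∈ Submodule.span L (Set.range fun i => G i) :=
      (Submodule.mem_span_range_iff_exists_fun L).mpr ⟨x, hsum⟩
    have hcne : c ≠ 0 := by
      intro h
      apply hx0
      have := Fintype.linearIndependent_iff.mp hG x (by rw [hsum, h])
      exact funext this
    have h1 := hMRD c hcmem hcne
    have hdetB : IsUnit B.det := by
      have hbt : B.BlockTriangular id := fun i j hij => hlow i j hij
      rw [Matrix.det_of_upperTriangular hbt]
      simp [hdiag]
    have hzero : ∀ t i, (expand b (Matrix.vecMul c (B.map (algebraMap Fq L)))) i (cols t) = 0 := by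
      intro t i
      have hxvt : Matrix.vecMul x ((G * B.map (algebraMap Fq L)).submatrix id cols) t = 0 :=
        congrFun hxv t
      have hcol : Matrix.vecMul c (B.map (algebraMap Fq L)) (cols t) = 0 := by
        rw [hc, Matrix.vecMul_vecMul]
        simpa [Matrix.vecMul, dotProduct, Matrix.submatrix_apply] using hxvt
      simp [expand, hcol]
    have h4 : (expand b (Matrix.vecMul c (B.map (algebraMap Fq L)))).rank ≤ n - k :=
      rank_le_of_zero_cols hmono.injective hzero
    have h5 : (expand b c).rank ≤ n - k := by
      rw [← Matrix.rank_mul_eq_left_of_isUnit_det B (expand b c) hdetB,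
        ← expand_vecMul b c B]
      exact h4
    omega
  · intro hmin c hcmem hcne
    by_contra hr
    push_neg at hr
    have hrle : (expand b c).rank ≤ n - k := by omega
    set φ := Fintype.linearCombination Fq c with hφ
    have hK : k ≤ Module.finrank Fq (LinearMap.ker φ) := by
      have h5 : Module.finrank Fq (LinearMap.range φ) = (expand b c).rank := by
        rw [rank_expand, hφ, Fintype.range_linearCombination]
      have h6 := LinearMap.finrank_range_add_finrank_ker φ
      have h7 : Module.finrank Fq (Fin n → Fq) = n := by simp
      omega
    obtain ⟨cols, hmono, w, hw⟩ := exists_pivots (LinearMap.ker φ) hK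
    set B : Matrix (Fin n) (Fin n) Fq := Matrix.of fun i j =>
      if h : ∃ t, cols t = j then w h.choose i else if i = j then 1 else 0 with hB
    have key : ∀ t i, B i (cols t) = w t i := by
      intro t i
      have hex : ∃ t', cols t' = cols t := ⟨t, rfl⟩
      have hch : hex.choose = t := hmono.injective hex.choose_spec
      simp only [hB, Matrix.of_apply, dif_pos hex, hch]
    have hdiag : ∀ i, B i i = 1 := by
      intro i
      by_cases h : ∃ t, cols t = i
      · obtain ⟨t, rfl⟩ := h
        rw [key]
        exact (hw t).2.1
      · simp [hB, dif_neg h]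
    have hlow : ∀ i j : Fin n, (j : ℕ) < (i : ℕ) → B i j = 0 := by
      intro i j hij
      by_cases h : ∃ t, cols t = j
      · obtain ⟨t, rfl⟩ := h
        rw [key]
        exact (hw t).2.2 i hij
      · have hne : i ≠ j := fun e => by omega
        simp [hB, dif_neg h, hne]
    have hdet := hmin B hdiag hlow cols hmono
    apply hdet
    rw [← Matrix.exists_vecMul_eq_zero_iff]
    obtain ⟨x, hsum⟩ := (Submodule.mem_span_range_iff_exists_fun L).mp hcmem
    have hx0 : x ≠ 0 := by
      intro h
      apply hcne
      rw [← hsum, h]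
      simp
    have hc' : Matrix.vecMul x G = c := by
      funext j
      rw [← hsum]
      simp [Matrix.vecMul, dotProduct, Finset.sum_apply]
    refine ⟨x, hx0, ?_⟩
    funext t
    have hcol : Matrix.vecMul c (B.map (algebraMap Fq L)) (cols t) = 0 := by
      have hwker : φ (w t) = 0 := (hw t).1
      have e1 : Matrix.vecMul c (B.map (algebraMap Fq L)) (cols t)
          = ∑ i, c i * algebraMap Fq L (w t i) := by
        simp [Matrix.vecMul, dotProduct, Matrix.map_apply, key]
      have e2 : (∑ i, c i * algebraMap Fq L (w t i)) = ∑ i, w t i • c i :=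
        Finset.sum_congr rfl fun i _ => by rw [Algebra.smul_def, mul_comm]
      rw [e1, e2]
      simpa [hφ, Fintype.linearCombination_apply] using hwker
    have : Matrix.vecMul x ((G * B.map (algebraMap Fq L)).submatrix id cols) t
        = Matrix.vecMul c (B.map (algebraMap Fq L)) (cols t) := by
      rw [← hc', Matrix.vecMul_vecMul]
      simp [Matrix.vecMul, dotProduct, Matrix.submatrix_apply]
    rw [Pi.zero_apply]
    rw [this, hcol]
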